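/- Let E0 > 0 and set C23 = 2(2 + E0 + √(E0(E0+4))). Suppose γ_n > 0 with γ_n → 0, μ_n > 0 with γ_n²/μ_n → C23, and for each n the pair (q_n, ν_n) with ν_n > 0 and −1 < q_n < 0 solves the transition system (A)–(B) for the parameters (E0, γ_n, μ_n), with q_n → −1. Then ν_n → 0 and ν_n³/γ_n⁴ → 27/((E0+4)·C23); equivalently, the corresponding transition frequencies ω_n = E1(γ_n) + ν_n satisfy (ω_n − E0)/γ_n^{4/3} → 3/((E0+4)·C23)^{1/3}. -/

import Mathlib

open Filter

/-- The unique positive root of `ε² + (E0+4)ε - γ² = 0`. -/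
noncomputable def epsPar (E0 γ : ℝ) : ℝ :=
  (-(E0 + 4) + Real.sqrt ((E0 + 4)^2 + 4 * γ^2)) / 2

/-- `E1 = E0 + ε`. -/
noncomputable def E1Par (E0 γ : ℝ) : ℝ := E0 + epsPar E0 γ

/-- `a = 4 + E0 + ε`. -/
noncomputable def aPar (E0 γ : ℝ) : ℝ := 4 + E0 + epsPar E0 γ

/-- Equation (A) of the transition system:
`(1-q)(1+q) = 12γ⁴ / (ν² (ν+E1) (ν+a+ε)²)`. -/
def EqA (E0 γ q ν : ℝ) : Prop :=
  (1 - q) * (1 + q) =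
    12 * γ^4 / (ν^2 * (ν + E1Par E0 γ) * (ν + aPar E0 γ + epsPar E0 γ)^2)

/-- Equation (B) of the transition system:
`(2+q)²/(1+q) = (9/2)(μ/γ²)(ν+a)²(ν+E1)/(ν(ν+a+ε))`. -/
def EqB (E0 γ μ q ν : ℝ) : Prop :=
  (2 + q)^2 / (1 + q) =
    (9/2) * (μ / γ^2) * ((ν + aPar E0 γ)^2 * (ν + E1Par E0 γ)) /
      (ν * (ν + aPar E0 γ + epsPar E0 γ))


lemma eps_pos {E0 γ : ℝ} (hE0 : 0 < E0) (hγ : 0 < γ) : 0 < epsPar E0 γ := by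
  have h1 : (E0 + 4) < Real.sqrt ((E0 + 4)^2 + 4 * γ^2) := by
    rw [Real.lt_sqrt (by linarith)]
    nlinarith
  unfold epsPar; linarith

lemma eps_eq {E0 γ : ℝ} (hE0 : 0 < E0) (hγ : 0 < γ) :
    epsPar E0 γ ^ 2 + (E0 + 4) * epsPar E0 γ = γ ^ 2 := by
  have hs : Real.sqrt ((E0 + 4)^2 + 4 * γ^2) ^ 2 = (E0 + 4)^2 + 4 * γ^2 :=
    Real.sq_sqrt (by positivity)
  unfold epsPar; nlinarith [hs]

lemma eps_le {E0 γ : ℝ} (hE0 : 0 < E0) (hγ : 0 < γ) :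
    epsPar E0 γ ≤ γ ^ 2 / (E0 + 4) := by
  have h := eps_eq hE0 hγ
  have h2 := eps_pos hE0 hγ
  rw [le_div_iff₀ (by linarith)]
  nlinarith

lemma key_identity (E0 : ℝ) (hE0 : 0 < E0) {γ μ q ν : ℝ}
    (hγ : 0 < γ) (hν : 0 < ν) (hq1 : -1 < q) (hq0 : q < 0)
    (hA : EqA E0 γ q ν) (hB : EqB E0 γ μ q ν) :
    (2 + q)^2 * (1 - q) * ν^3 * (ν + aPar E0 γ + epsPar E0 γ)^3
      = 54 * μ * γ^2 * (ν + aPar E0 γ)^2 := by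
  have hε := eps_pos hE0 hγ
  unfold EqA at hA
  unfold EqB at hB
  unfold E1Par aPar at *
  set e := epsPar E0 γ with he
  have h1 : ν + (E0 + e) > 0 := by linarith
  have h2 : ν + (4 + E0 + e) + e > 0 := by linarith
  have h3 : ν + (4 + E0 + e) > 0 := by linarith
  have hq1' : (1:ℝ) + q > 0 := by linarith
  rw [eq_div_iff (by positivity)] at hA
  rw [div_eq_div_iff (by positivity) (by positivity)] at hB
  field_simp at hB
  have hgoal2 : ((2 + q)^2 * (1 - q) * ν^3 * (ν + (4 + E0 + e) + e)^3) * (2 * γ^2)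
      = (54 * μ * γ^2 * (ν + (4 + E0 + e))^2) * (2 * γ^2) := by
    linear_combination (1-q)*ν^2*(ν+(4+E0+e)+e)^2 * hB + 9*μ*(ν+(4+E0+e))^2 * hA
  exact mul_right_cancel₀ (by positivity) hgoal2


/-- at the ω2-ω3 bifurcation power law `γ²/μ → C23`, the transition
solutions with `q → -1` have `ν → 0` with `ν³/γ⁴ → 27/((E0+4) C23)`; equivalently
`(ω - E0)/γ^{4/3} → 3/((E0+4) C23)^{1/3}` for `ω = E1 + ν`. -/
theorem omega1_asymptotics_at_omega23_bifurcation
    (E0 : ℝ) (hE0 : 0 < E0) (γ μ q ν : ℕ → ℝ)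
    (C23 : ℝ) (hC23 : C23 = 2 * (2 + E0 + Real.sqrt (E0 * (E0 + 4))))
    (hγpos : ∀ n, 0 < γ n)
    (hγ0 : Tendsto γ atTop (nhds 0))
    (hμpos : ∀ n, 0 < μ n)
    (hpow : Tendsto (fun n => (γ n)^2 / μ n) atTop (nhds C23))
    (hνpos : ∀ n, 0 < ν n)
    (hq : ∀ n, -1 < q n ∧ q n < 0)
    (hA : ∀ n, EqA E0 (γ n) (q n) (ν n))
    (hB : ∀ n, EqB E0 (γ n) (μ n) (q n) (ν n))
    (hqm1 : Tendsto q atTop (nhds (-1))) :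
    Tendsto ν atTop (nhds 0) ∧
    Tendsto (fun n => (ν n)^3 / (γ n)^4) atTop (nhds (27 / ((E0 + 4) * C23))) ∧
    Tendsto (fun n => (E1Par E0 (γ n) + ν n - E0) / (γ n) ^ ((4:ℝ)/3)) atTop
        (nhds (3 / ((E0 + 4) * C23) ^ ((1:ℝ)/3))) := by
  have hC : 0 < C23 := by
    rw [hC23]; have := Real.sqrt_nonneg (E0 * (E0 + 4)); linarith
  -- ε facts
  have hεpos : ∀ n, 0 < epsPar E0 (γ n) := fun n => eps_pos hE0 (hγpos n)
  have hεle : ∀ n, epsPar E0 (γ n) ≤ (γ n)^2 / (E0 + 4) := fun n => eps_le hE0 (hγpos n)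
  have hγ2 : Tendsto (fun n => (γ n)^2) atTop (nhds 0) := by
    simpa using hγ0.pow 2
  have hε0 : Tendsto (fun n => epsPar E0 (γ n)) atTop (nhds 0) := by
    apply tendsto_of_tendsto_of_tendsto_of_le_of_le (g := fun _ => (0:ℝ))
      (h := fun n => (γ n)^2 / (E0 + 4)) tendsto_const_nhds
      (by simpa using hγ2.div_const (E0 + 4))
      (fun n => (hεpos n).le) hεle
  -- μ/γ² → C23⁻¹
  have hinv : Tendsto (fun n => μ n / (γ n)^2) atTop (nhds C23⁻¹) := by
    have := hpow.inv₀ (ne_of_gt hC)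
    apply this.congr
    intro n; rw [inv_div]
  -- μγ² → 0
  have hμγ2 : Tendsto (fun n => μ n * (γ n)^2) atTop (nhds 0) := by
    have h4 : Tendsto (fun n => (γ n)^4) atTop (nhds 0) := by simpa using hγ0.pow 4
    have := hinv.mul h4
    rw [mul_zero] at this
    apply this.congr
    intro n
    have : (γ n)^2 ≠ 0 := pow_ne_zero 2 (hγpos n).ne'
    field_simp
  -- key identity
  have hkey : ∀ n, (2 + q n)^2 * (1 - q n) * (ν n)^3 *
      (ν n + aPar E0 (γ n) + epsPar E0 (γ n))^3
      = 54 * μ n * (γ n)^2 * (ν n + aPar E0 (γ n))^2 := fun n =>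
    key_identity E0 hE0 (hγpos n) (hνpos n) (hq n).1 (hq n).2 (hA n) (hB n)
  -- eventual bound on ν³
  have hqev : ∀ᶠ n in atTop, q n < -1/2 := by
    have := hqm1 (Iio_mem_nhds (show (-1:ℝ) < -1/2 by norm_num))
    filter_upwards [this] with n hn using hn
  have hν3bd : ∀ᶠ n in atTop, (ν n)^3 ≤ 54 * μ n * (γ n)^2 / (E0 + 4) := by
    filter_upwards [hqev] with n hn
    have hk := hkey n
    have hε := hεpos n
    have ha : aPar E0 (γ n) = 4 + E0 + epsPar E0 (γ n) := rfl
    have hν := hνpos n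
    have hq1 := (hq n).1
    rw [le_div_iff₀ (by linarith)]
    set a := aPar E0 (γ n) with hadef
    set e := epsPar E0 (γ n) with hedef
    have hA4 : E0 + 4 ≤ ν n + a := by rw [ha]; linarith
    have hApos : (0:ℝ) < ν n + a := lt_of_lt_of_le (by linarith) hA4
    have hS3 : (ν n + a)^2 * (E0 + 4) ≤ (ν n + a + e)^3 := by
      have t1 : (ν n + a)^2 * (E0 + 4) ≤ (ν n + a)^2 * (ν n + a) :=
        mul_le_mul_of_nonneg_left hA4 (sq_nonneg _)
      have t2 : (ν n + a)^3 ≤ (ν n + a + e)^3 :=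
        pow_le_pow_left₀ hApos.le (by linarith) 3
      have t3 : (ν n + a)^2 * (ν n + a) = (ν n + a)^3 := by ring
      linarith
    have hc : 1 ≤ (2 + q n)^2 * (1 - q n) := by nlinarith
    have hstep1 : (ν n)^3 * ((ν n + a)^2 * (E0 + 4)) ≤ (ν n)^3 * (ν n + a + e)^3 :=
      mul_le_mul_of_nonneg_left hS3 (by positivity)
    have hSpos : (0:ℝ) < ν n + a + e := by rw [ha]; linarith
    have hstep2 : (ν n)^3 * (ν n + a + e)^3 ≤ (2 + q n)^2 * (1 - q n) * (ν n)^3 * (ν n + a + e)^3 := by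
      have h0 : (0:ℝ) ≤ (ν n)^3 * (ν n + a + e)^3 := by positivity
      nlinarith [mul_nonneg (sub_nonneg.mpr hc) h0]
    have e1 : (ν n)^3 * (E0 + 4) * (ν n + a)^2 = (ν n)^3 * ((ν n + a)^2 * (E0 + 4)) := by ring
    have hchain : (ν n)^3 * (E0 + 4) * (ν n + a)^2 ≤ 54 * μ n * (γ n)^2 * (ν n + a)^2 := by
      linarith [hstep1, hstep2, hk, e1]
    have hA2 : (0:ℝ) < (ν n + a)^2 := pow_pos hApos 2
    exact le_of_mul_le_mul_right hchain hA2
  -- ν³ → 0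
  have hub : Tendsto (fun n => 54 * μ n * (γ n)^2 / (E0 + 4)) atTop (nhds 0) := by
    have h := (hμγ2.const_mul 54).div_const (E0 + 4)
    simp only [mul_zero, zero_div] at h
    apply h.congr
    intro n; ring
  have hν3 : Tendsto (fun n => (ν n)^3) atTop (nhds 0) :=
    tendsto_of_tendsto_of_tendsto_of_le_of_le' tendsto_const_nhds hub
      (Eventually.of_forall fun n => (pow_pos (hνpos n) 3).le) hν3bd
  have hν0 : Tendsto ν atTop (nhds 0) := by
    have hcont : Tendsto (fun x : ℝ => x ^ ((1:ℝ)/3)) (nhds 0) (nhds 0) := by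
      have h := (Real.continuousAt_rpow_const 0 ((1:ℝ)/3) (Or.inr (by norm_num))).tendsto
      simpa [Real.zero_rpow (by norm_num : ((1:ℝ)/3) ≠ 0)] using h
    have h := hcont.comp hν3
    apply h.congr
    intro n
    show ((ν n)^3) ^ ((1:ℝ)/3) = ν n
    rw [← Real.rpow_natCast (ν n) 3, ← Real.rpow_mul (hνpos n).le]
    norm_num
  -- pointwise formula for ν³/γ⁴
  have hfrac : ∀ n, (ν n)^3 / (γ n)^4 =
      54 * (μ n / (γ n)^2) * (ν n + aPar E0 (γ n))^2 /
        ((2 + q n)^2 * (1 - q n) * (ν n + aPar E0 (γ n) + epsPar E0 (γ n))^3) := by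
    intro n
    have hk := hkey n
    have h2q : (0:ℝ) < 2 + q n := by linarith [(hq n).1]
    have h1q : (0:ℝ) < 1 - q n := by linarith [(hq n).2]
    have hS : (0:ℝ) < ν n + aPar E0 (γ n) + epsPar E0 (γ n) := by
      have h1 := hεpos n; have h2 := hνpos n
      unfold aPar; linarith
    have hγn : γ n ≠ 0 := (hγpos n).ne'
    have hd : (2 + q n)^2 * (1 - q n) * (ν n + aPar E0 (γ n) + epsPar E0 (γ n))^3 ≠ 0 :=
      mul_ne_zero (mul_ne_zero (pow_ne_zero 2 h2q.ne') h1q.ne') (pow_ne_zero 3 hS.ne')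
    field_simp
    linear_combination hk
  -- limits of the pieces
  have hqlim2 : Tendsto (fun n => (2 + q n)^2 * (1 - q n)) atTop (nhds 2) := by
    have h := (((tendsto_const_nhds (x := (2:ℝ))).add hqm1).pow 2).mul
      ((tendsto_const_nhds (x := (1:ℝ))).sub hqm1)
    norm_num at h
    exact h
  have hAlim : Tendsto (fun n => ν n + aPar E0 (γ n)) atTop (nhds (E0 + 4)) := by
    have h := hν0.add (hε0.const_add (4 + E0))
    have hval : (E0 + 4 : ℝ) = 0 + (4 + E0 + 0) := by ring
    rw [hval]
    exact h
  have hSlim : Tendsto (fun n => ν n + aPar E0 (γ n) + epsPar E0 (γ n)) atTop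
      (nhds (E0 + 4)) := by
    have h := hAlim.add hε0
    simpa using h
  have hden_ne : (2 : ℝ) * (E0 + 4)^3 ≠ 0 := by positivity
  have hmain : Tendsto (fun n => (ν n)^3 / (γ n)^4) atTop
      (nhds (27 / ((E0 + 4) * C23))) := by
    have hnum : Tendsto (fun n => 54 * (μ n / (γ n)^2) * (ν n + aPar E0 (γ n))^2)
        atTop (nhds (54 * C23⁻¹ * (E0 + 4)^2)) := (hinv.const_mul 54).mul (hAlim.pow 2)
    have hden : Tendsto (fun n => (2 + q n)^2 * (1 - q n) *
        (ν n + aPar E0 (γ n) + epsPar E0 (γ n))^3) atTop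
        (nhds (2 * (E0 + 4)^3)) := hqlim2.mul (hSlim.pow 3)
    have h := hnum.div hden hden_ne
    have hval : 27 / ((E0 + 4) * C23) = 54 * C23⁻¹ * (E0 + 4)^2 / (2 * (E0 + 4)^3) := by
      field_simp
      ring
    rw [hval]
    exact h.congr fun n => (hfrac n).symm
  -- third statement
  have hLpos : (0:ℝ) < 27 / ((E0 + 4) * C23) := by positivity
  have h3a : Tendsto (fun n => ((ν n)^3 / (γ n)^4) ^ ((1:ℝ)/3)) atTop
      (nhds ((27 / ((E0 + 4) * C23)) ^ ((1:ℝ)/3))) :=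
    hmain.rpow_const (Or.inr (by norm_num))
  have hεg : Tendsto (fun n => epsPar E0 (γ n) / (γ n) ^ ((4:ℝ)/3)) atTop (nhds 0) := by
    have hup : Tendsto (fun n => (γ n) ^ ((2:ℝ)/3) / (E0 + 4)) atTop (nhds 0) := by
      have h := (hγ0.rpow_const (p := (2:ℝ)/3) (Or.inr (by norm_num))).div_const (E0 + 4)
      simpa [Real.zero_rpow (by norm_num : ((2:ℝ)/3) ≠ 0)] using h
    apply tendsto_of_tendsto_of_tendsto_of_le_of_le (g := fun _ => (0:ℝ))
      (h := fun n => (γ n) ^ ((2:ℝ)/3) / (E0 + 4)) tendsto_const_nhds hup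
    · intro n
      have := hεpos n
      have := Real.rpow_pos_of_pos (hγpos n) ((4:ℝ)/3)
      positivity
    · intro n
      have hg : (0:ℝ) < (γ n) ^ ((4:ℝ)/3) := Real.rpow_pos_of_pos (hγpos n) _
      have h1 : epsPar E0 (γ n) / (γ n) ^ ((4:ℝ)/3) ≤ ((γ n)^2 / (E0 + 4)) / (γ n) ^ ((4:ℝ)/3) := by
        gcongr
        exact hεle n
      have h2 : ((γ n)^2 / (E0 + 4)) / (γ n) ^ ((4:ℝ)/3) = (γ n) ^ ((2:ℝ)/3) / (E0 + 4) := by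
        rw [div_div, mul_comm, ← div_div]
        congr 1
        rw [← Real.rpow_natCast (γ n) 2, ← Real.rpow_sub (hγpos n)]
        norm_num
      rw [h2] at h1
      exact h1
  have hsplit : ∀ n, (E1Par E0 (γ n) + ν n - E0) / (γ n) ^ ((4:ℝ)/3) =
      epsPar E0 (γ n) / (γ n) ^ ((4:ℝ)/3) + ((ν n)^3 / (γ n)^4) ^ ((1:ℝ)/3) := by
    intro n
    have hν := hνpos n
    have hγn := hγpos n
    have hcube : ((ν n)^3 / (γ n)^4) ^ ((1:ℝ)/3) = ν n / (γ n) ^ ((4:ℝ)/3) := by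
      rw [Real.div_rpow (by positivity) (by positivity)]
      congr 1
      · rw [← Real.rpow_natCast (ν n) 3, ← Real.rpow_mul hν.le]
        norm_num
      · rw [← Real.rpow_natCast (γ n) 4, ← Real.rpow_mul hγn.le]
        norm_num
    rw [hcube]
    have : E1Par E0 (γ n) + ν n - E0 = epsPar E0 (γ n) + ν n := by
      unfold E1Par; ring
    rw [this, add_div]
  have hval3 : (3 : ℝ) / ((E0 + 4) * C23) ^ ((1:ℝ)/3) =
      0 + (27 / ((E0 + 4) * C23)) ^ ((1:ℝ)/3) := by
    rw [zero_add, Real.div_rpow (by norm_num) (by positivity)]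
    congr 1
    rw [show (27:ℝ) = 3 ^ (3:ℕ) by norm_num, ← Real.rpow_natCast 3 3,
      ← Real.rpow_mul (by norm_num)]
    norm_num
  have hthird : Tendsto (fun n => (E1Par E0 (γ n) + ν n - E0) / (γ n) ^ ((4:ℝ)/3)) atTop
      (nhds (3 / ((E0 + 4) * C23) ^ ((1:ℝ)/3))) := by
    rw [hval3]
    exact (hεg.add h3a).congr fun n => (hsplit n).symm
  exact ⟨hν0, hmain, hthird⟩
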